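/- For positive real p₁,…,pₙ with Σpⱼ = 1 and ρ = diag(p₁,…,pₙ), define the Hadamard-multiplier operator Φ̃_ρ on ℂ^{n×n} by (Φ̃_ρ(y))_{jk} = Φ̃(r_{jk})·y_{jk} where r_{jk} = √(p_j/p_k) and Φ̃(r) = (1/2)((r²+1)/(r²-1))·log r² (with Φ̃(1) = 1). Then Φ̃_ρ is self-adjoint with respect to the Hilbert–Schmidt inner product, and Tr[y*·Φ̃_ρ(y)] ≥ Tr(y*y) = Σ_{j,k}|y_{jk}|² for all y ∈ ℂ^{n×n}. -/

import Mathlib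

open Matrix

/-- Φ̃(r) = (1/2)·((r²+1)/(r²-1))·log(r²), with limiting values Φ̃(±1) = 1. -/
noncomputable def PhiTilde (r : ℝ) : ℝ :=
  if r = 1 ∨ r = -1 then 1 else (1 / 2) * ((r ^ 2 + 1) / (r ^ 2 - 1)) * Real.log (r ^ 2)

/-- The Hadamard-multiplier operator `Φ̃_ρ` on `ℂ^{n×n}`:
`(Φ̃_ρ(y))_{jk} = Φ̃(√(p_j/p_k))·y_{jk}`. -/
noncomputable def phiTildeOp {n : ℕ} (p : Fin n → ℝ) (y : Matrix (Fin n) (Fin n) ℂ) :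
    Matrix (Fin n) (Fin n) ℂ :=
  Matrix.of fun j k => (PhiTilde (Real.sqrt (p j / p k)) : ℂ) * y j k

/-- `log t ≥ 2(t-1)/(t+1)` for `t ≥ 1`. -/
lemma aux_log (t : ℝ) (ht : 1 ≤ t) : 2 * (t - 1) / (t + 1) ≤ Real.log t := by
  set f : ℝ → ℝ := fun x => Real.log x - 2 * (x - 1) / (x + 1) with hf
  have hder : ∀ x ∈ Set.Ioi (1:ℝ),
      HasDerivAt f (x⁻¹ - (2 * (x + 1) - 2 * (x - 1) * 1) / (x + 1) ^ 2) x := by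
    intro x hx
    have hx0 : (0:ℝ) < x := lt_trans one_pos hx
    have h1 : HasDerivAt Real.log x⁻¹ x := Real.hasDerivAt_log (ne_of_gt hx0)
    have h2 : HasDerivAt (fun x : ℝ => 2 * (x - 1)) 2 x := by
      simpa using ((hasDerivAt_id x).sub_const 1).const_mul 2
    have h3 : HasDerivAt (fun x : ℝ => x + 1) 1 x := (hasDerivAt_id x).add_const 1
    have h4 := h2.div h3 (by positivity)
    exact h1.sub h4
  have hmono : MonotoneOn f (Set.Ici 1) := by
    apply monotoneOn_of_deriv_nonneg (convex_Ici 1)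
    · apply ContinuousOn.sub
      · exact Real.continuousOn_log.mono (by intro x hx; simp at hx ⊢; linarith)
      · apply ContinuousOn.div
        · fun_prop
        · fun_prop
        · intro x hx; simp at hx; positivity
    · intro x hx
      rw [interior_Ici] at hx
      exact (hder x hx).differentiableAt.differentiableWithinAt
    · intro x hx
      rw [interior_Ici] at hx
      rw [(hder x hx).deriv]
      have hx1 : (1:ℝ) < x := hx
      have hx0 : (0:ℝ) < x := by linarith
      have : x⁻¹ - (2 * (x + 1) - 2 * (x - 1) * 1) / (x + 1) ^ 2
          = (x - 1) ^ 2 / (x * (x + 1) ^ 2) := by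
        field_simp; ring
      rw [this]; positivity
  have h1 := hmono (Set.self_mem_Ici) (Set.mem_Ici.mpr ht) ht
  simp [hf, Real.log_one] at h1
  linarith

/-- `((t+1)/(t-1))·log t ≥ 2` for positive `t ≠ 1`. -/
lemma key_ineq (t : ℝ) (ht : 0 < t) (ht1 : t ≠ 1) : 2 ≤ ((t + 1) / (t - 1)) * Real.log t := by
  rcases lt_or_gt_of_ne ht1 with h | h
  · have h2 := aux_log t⁻¹ (by rw [le_inv_comm₀ one_pos ht]; simpa using h.le)
    rw [Real.log_inv] at h2
    have hd : 2 * (t⁻¹ - 1) / (t⁻¹ + 1) = -(2 * (t - 1) / (t + 1)) := by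
      field_simp
      ring
    rw [hd] at h2
    have hlog : Real.log t ≤ 2 * (t - 1) / (t + 1) := by linarith
    have ht1' : t - 1 < 0 := by linarith
    rw [div_mul_eq_mul_div, le_div_iff_of_neg ht1']
    calc (t + 1) * Real.log t ≤ (t + 1) * (2 * (t - 1) / (t + 1)) := by
          apply mul_le_mul_of_nonneg_left hlog (by linarith)
      _ = 2 * (t - 1) := by field_simp
  · have h2 := aux_log t h.le
    have ht1' : (0:ℝ) < t - 1 := by linarith
    rw [div_mul_eq_mul_div, le_div_iff₀ ht1']
    calc 2 * (t - 1) = (t + 1) * (2 * (t - 1) / (t + 1)) := by field_simp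
      _ ≤ (t + 1) * Real.log t := mul_le_mul_of_nonneg_left h2 (by linarith)

/-- `Φ̃(r) ≥ 1` for `r > 0`. -/
lemma PhiTilde_ge_one (r : ℝ) (hr : 0 < r) : 1 ≤ PhiTilde r := by
  unfold PhiTilde
  by_cases h : r = 1 ∨ r = -1
  · rw [if_pos h]
  · rw [if_neg h]
    push_neg at h
    have ht : (0:ℝ) < r ^ 2 := by positivity
    have ht1 : r ^ 2 ≠ 1 := by
      intro hc
      exact h.1 (by nlinarith)
    have := key_ineq (r ^ 2) ht ht1
    linarith

/-- For `ρ = diag(p₁,…,pₙ)` with `pⱼ > 0`, `Σpⱼ = 1`, the operator `Φ̃_ρ` is self-adjoint for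
the Hilbert–Schmidt inner product, and `Tr[y*·Φ̃_ρ(y)] ≥ Tr(y*y) = Σ_{j,k}|y_{jk}|²`. -/
theorem phiTildeOp_selfAdjoint_and_ge {n : ℕ} (p : Fin n → ℝ)
    (hp : ∀ j, 0 < p j) (hp1 : ∑ j, p j = 1) :
    (∀ a b : Matrix (Fin n) (Fin n) ℂ,
        Matrix.trace (aᴴ * phiTildeOp p b) = Matrix.trace ((phiTildeOp p a)ᴴ * b)) ∧
    (∀ y : Matrix (Fin n) (Fin n) ℂ,
        (Matrix.trace (yᴴ * phiTildeOp p y)).re ≥ (Matrix.trace (yᴴ * y)).re ∧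
        (Matrix.trace (yᴴ * y)).re = ∑ j : Fin n, ∑ k : Fin n, ‖y j k‖ ^ 2) := by
  have hge : ∀ j k : Fin n, 1 ≤ PhiTilde (Real.sqrt (p j / p k)) := fun j k =>
    PhiTilde_ge_one _ (Real.sqrt_pos.mpr (div_pos (hp j) (hp k)))
  constructor
  · intro a b
    simp only [Matrix.trace, Matrix.diag, Matrix.mul_apply, Matrix.conjTranspose_apply,
      phiTildeOp, Matrix.of_apply]
    apply Finset.sum_congr rfl; intro i _
    apply Finset.sum_congr rfl; intro j _
    simp only [star_mul', Complex.star_def, Complex.conj_ofReal]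
    ring
  · intro y
    have e1 : (Matrix.trace (yᴴ * y)).re = ∑ j : Fin n, ∑ k : Fin n, ‖y j k‖ ^ 2 := by
      simp only [Matrix.trace, Matrix.diag, Matrix.mul_apply, Matrix.conjTranspose_apply,
        Complex.re_sum]
      rw [Finset.sum_comm]
      apply Finset.sum_congr rfl; intro j _
      apply Finset.sum_congr rfl; intro i _
      rw [Complex.star_def, mul_comm, Complex.mul_conj, Complex.normSq_eq_norm_sq,
        Complex.ofReal_re]
    have e2 : (Matrix.trace (yᴴ * phiTildeOp p y)).re =
        ∑ j : Fin n, ∑ k : Fin n, PhiTilde (Real.sqrt (p j / p k)) * ‖y j k‖ ^ 2 := by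
      simp only [Matrix.trace, Matrix.diag, Matrix.mul_apply, Matrix.conjTranspose_apply,
        phiTildeOp, Matrix.of_apply, Complex.re_sum]
      rw [Finset.sum_comm]
      apply Finset.sum_congr rfl; intro j _
      apply Finset.sum_congr rfl; intro i _
      rw [Complex.star_def]
      have hz : (starRingEnd ℂ) (y j i) * (↑(PhiTilde (Real.sqrt (p j / p i))) * y j i) =
          ↑(PhiTilde (Real.sqrt (p j / p i))) * (y j i * (starRingEnd ℂ) (y j i)) := by ring
      rw [hz, Complex.mul_conj, ← Complex.ofReal_mul, Complex.ofReal_re]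
      simp [Complex.normSq_eq_norm_sq]
    refine ⟨?_, e1⟩
    rw [e1, e2, ge_iff_le]
    apply Finset.sum_le_sum; intro j _
    apply Finset.sum_le_sum; intro k _
    exact le_mul_of_one_le_left (by positivity) (hge j k)
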